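/- (Lemma 1) Suppose X_1, …, X_n affinely span ℝ^d. For every fixed θ ∈ Θ_n and every α ∈ [0,1], the empirical likelihood ratio is monotone along the ray from the sample mean: R(θ̃ + α(θ − θ̃)) ≥ R(θ); equivalently, l(θ̃ + α(θ − θ̃)) ≤ l(θ). -/

import Mathlib

noncomputable section

/-- The set of empirical likelihood weight vectors for `θ`:
`W(θ) = {w : wᵢ ≥ 0, Σ wᵢ = 1, Σ wᵢ Xᵢ = θ}`. -/
def Wset (n d : ℕ) (X : Fin n → EuclideanSpace ℝ (Fin d))
    (θ : EuclideanSpace ℝ (Fin d)) : Set (Fin n → ℝ) :=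
  {w | (∀ i, 0 ≤ w i) ∧ ∑ i, w i = 1 ∧ ∑ i, w i • X i = θ}

/-- The empirical likelihood ratio `R(θ) = sup {∏ n·wᵢ : w ∈ W(θ)}` (the sup over
the empty set is `0`, since `Real.sSup ∅ = 0`). -/
def elR (n d : ℕ) (X : Fin n → EuclideanSpace ℝ (Fin d))
    (θ : EuclideanSpace ℝ (Fin d)) : ℝ :=
  sSup ((fun w => ∏ i, (n : ℝ) * w i) '' Wset n d X θ)

/-- The empirical log-likelihood ratio `l(θ) = -2 log R(θ)`. -/
def elln (n d : ℕ) (X : Fin n → EuclideanSpace ℝ (Fin d))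
    (θ : EuclideanSpace ℝ (Fin d)) : ℝ :=
  -2 * Real.log (elR n d X θ)

/-- The sample mean `θ̃ = n⁻¹ Σ Xᵢ`. -/
def sampleMean (n d : ℕ) (X : Fin n → EuclideanSpace ℝ (Fin d)) :
    EuclideanSpace ℝ (Fin d) :=
  (n : ℝ)⁻¹ • ∑ i, X i

/-- The composite similarity mapping `h(θ) = θ̃ + (1 + l(θ)/(2n))(θ - θ̃)`. -/
def csm (n d : ℕ) (X : Fin n → EuclideanSpace ℝ (Fin d))
    (θ : EuclideanSpace ℝ (Fin d)) : EuclideanSpace ℝ (Fin d) :=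
  sampleMean n d X + (1 + elln n d X θ / (2 * n)) • (θ - sampleMean n d X)

lemma prodLeOne (n : ℕ) (hn : 0 < n) (w : Fin n → ℝ) (h0 : ∀ i, 0 ≤ w i)
    (h1 : ∑ i, w i = 1) : ∏ i, (n : ℝ) * w i ≤ 1 := by
  have hz : ∀ i ∈ Finset.univ, (0:ℝ) ≤ (n:ℝ) * w i :=
    fun i _ => mul_nonneg (Nat.cast_nonneg n) (h0 i)
  have hP : (0:ℝ) ≤ ∏ i, (n:ℝ) * w i := Finset.prod_nonneg hz
  have hgm := Real.geom_mean_le_arith_mean_weighted Finset.univ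
    (fun _ => (n:ℝ)⁻¹) (fun i => (n:ℝ) * w i)
    (fun i _ => by positivity) (by
      simp [Finset.sum_const, Finset.card_univ]
      field_simp)
    hz
  have hnne : ((n:ℝ)) ≠ 0 := Nat.cast_ne_zero.mpr hn.ne'
  have hsum : ∑ i, (n:ℝ)⁻¹ * ((n:ℝ) * w i) = 1 := by
    simp_rw [← mul_assoc, inv_mul_cancel₀ hnne, one_mul, h1]
  rw [hsum] at hgm
  rw [Real.finset_prod_rpow _ _ hz] at hgm
  set P := ∏ i, (n:ℝ) * w i
  have : P = (P ^ ((n:ℝ)⁻¹)) ^ (n : ℕ) := by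
    rw [← Real.rpow_natCast (P ^ ((n:ℝ)⁻¹)) n, ← Real.rpow_mul hP,
      inv_mul_cancel₀ hnne, Real.rpow_one]
  rw [this]
  exact pow_le_one₀ (Real.rpow_nonneg hP _) hgm

lemma bddElR (n d : ℕ) (hn : 0 < n) (X : Fin n → EuclideanSpace ℝ (Fin d))
    (θ : EuclideanSpace ℝ (Fin d)) :
    BddAbove ((fun w => ∏ i, (n : ℝ) * w i) '' Wset n d X θ) := by
  refine ⟨1, ?_⟩
  rintro x ⟨w, ⟨h0, h1, -⟩, rfl⟩
  exact prodLeOne n hn w h0 h1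

lemma elRnonneg (n d : ℕ) (hn : 0 < n) (X : Fin n → EuclideanSpace ℝ (Fin d))
    (θ : EuclideanSpace ℝ (Fin d)) : 0 ≤ elR n d X θ := by
  rcases Set.eq_empty_or_nonempty ((fun w => ∏ i, (n : ℝ) * w i) '' Wset n d X θ) with h | h
  · simp [elR, h, Real.sSup_empty]
  · obtain ⟨x, hx⟩ := h
    obtain ⟨w, ⟨h0, h1, h2⟩, rfl⟩ := hx
    refine le_trans (Finset.prod_nonneg fun i _ => mul_nonneg (Nat.cast_nonneg n) (h0 i))
      (le_csSup (bddElR n d hn X θ) ⟨w, ⟨h0, h1, h2⟩, rfl⟩)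

lemma mixMem (n d : ℕ) (hn : 0 < n) (X : Fin n → EuclideanSpace ℝ (Fin d))
    (θ : EuclideanSpace ℝ (Fin d)) (α : ℝ) (hα0 : 0 ≤ α) (hα1 : α ≤ 1)
    (w : Fin n → ℝ) (hw : w ∈ Wset n d X θ) :
    (fun i => α * w i + (1 - α) / n) ∈
      Wset n d X (sampleMean n d X + α • (θ - sampleMean n d X)) := by
  obtain ⟨h0, h1, h2⟩ := hw
  have hnne : ((n:ℝ)) ≠ 0 := Nat.cast_ne_zero.mpr hn.ne'
  refine ⟨fun i => add_nonneg (mul_nonneg hα0 (h0 i))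
      (div_nonneg (by linarith) (Nat.cast_nonneg n)), ?_, ?_⟩
  · rw [Finset.sum_add_distrib, ← Finset.mul_sum, h1, Finset.sum_const, Finset.card_univ,
      Fintype.card_fin, nsmul_eq_mul]
    field_simp
    ring
  · have : ∑ i, (α * w i + (1 - α) / n) • X i
        = α • (∑ i, w i • X i) + ((1 - α) / n) • ∑ i, X i := by
      rw [Finset.smul_sum, Finset.smul_sum, ← Finset.sum_add_distrib]
      refine Finset.sum_congr rfl fun i _ => ?_
      rw [add_smul, smul_smul]
    rw [this, h2, sampleMean, div_eq_mul_inv]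
    module

lemma mixProd (n : ℕ) (hn : 0 < n) (α : ℝ) (hα0 : 0 ≤ α) (hα1 : α ≤ 1)
    (w : Fin n → ℝ) (h0 : ∀ i, 0 ≤ w i) (h1 : ∑ i, w i = 1) :
    ∏ i, (n : ℝ) * w i ≤ ∏ i, (n : ℝ) * (α * w i + (1 - α) / n) := by
  have hnne : ((n:ℝ)) ≠ 0 := Nat.cast_ne_zero.mpr hn.ne'
  have key : ∀ i, ((n:ℝ) * w i) ^ α ≤ (n : ℝ) * (α * w i + (1 - α) / n) := by
    intro i
    have h2 : (n:ℝ) * (α * w i + (1 - α) / n) = α * ((n:ℝ) * w i) + (1 - α) * 1 := by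
      field_simp
    rw [h2]
    calc ((n:ℝ) * w i) ^ α = ((n:ℝ) * w i) ^ α * (1:ℝ) ^ (1 - α) := by simp
      _ ≤ α * ((n:ℝ) * w i) + (1 - α) * 1 :=
        Real.geom_mean_le_arith_mean2_weighted hα0 (by linarith)
          (mul_nonneg (Nat.cast_nonneg n) (h0 i)) zero_le_one (by ring)
  have hP : (0:ℝ) ≤ ∏ i, (n:ℝ) * w i :=
    Finset.prod_nonneg fun i _ => mul_nonneg (Nat.cast_nonneg n) (h0 i)
  calc ∏ i, (n : ℝ) * w i = (∏ i, (n : ℝ) * w i) ^ (1:ℝ) := (Real.rpow_one _).symm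
    _ ≤ (∏ i, (n : ℝ) * w i) ^ α :=
        Real.rpow_le_rpow_of_exponent_ge' hP (prodLeOne n hn w h0 h1) hα0 hα1
    _ = ∏ i, ((n : ℝ) * w i) ^ α :=
        (Real.finset_prod_rpow _ _ (fun i _ => mul_nonneg (Nat.cast_nonneg n) (h0 i)) _).symm
    _ ≤ ∏ i, (n : ℝ) * (α * w i + (1 - α) / n) :=
        Finset.prod_le_prod (fun i _ => Real.rpow_nonneg
          (mul_nonneg (Nat.cast_nonneg n) (h0 i)) _) (fun i _ => key i)

lemma elRpos (n d : ℕ) (hn : 0 < n) (X : Fin n → EuclideanSpace ℝ (Fin d))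
    (θ : EuclideanSpace ℝ (Fin d))
    (hθ : θ ∈ interior (convexHull ℝ (Set.range X))) : 0 < elR n d X θ := by
  have hnne : ((n:ℝ)) ≠ 0 := Nat.cast_ne_zero.mpr hn.ne'
  have hnpos : (0:ℝ) < n := Nat.cast_pos.mpr hn
  set θ' := sampleMean n d X with hθ'
  -- find ε > 0 with θ + ε • (θ - θ') in the hull
  have hf : Continuous fun t : ℝ => θ + t • (θ - θ') := by continuity
  have hmem : (fun t : ℝ => θ + t • (θ - θ')) ⁻¹' interior (convexHull ℝ (Set.range X))
      ∈ nhds (0:ℝ) := by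
    apply hf.continuousAt.preimage_mem_nhds
    simpa using isOpen_interior.mem_nhds hθ
  obtain ⟨δ, hδpos, hδ⟩ := Metric.mem_nhds_iff.mp hmem
  set ε := δ / 2 with hε
  have hεpos : 0 < ε := by positivity
  have hθ'' : θ + ε • (θ - θ') ∈ convexHull ℝ (Set.range X) := by
    have : (ε : ℝ) ∈ Metric.ball (0:ℝ) δ := by
      rw [Metric.mem_ball, Real.dist_eq, sub_zero, abs_of_pos hεpos, hε]
      linarith
    exact interior_subset (hδ this)
  -- extract weights
  rw [convexHull_range_eq_exists_affineCombination] at hθ''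
  obtain ⟨s, v, hv0, hv1, hvθ⟩ := hθ''
  have hvlin : ∑ i ∈ s, v i • X i = θ + ε • (θ - θ') := by
    rw [← hvθ, Finset.affineCombination_eq_linear_combination s X v hv1]
  set u : Fin n → ℝ := fun i => if i ∈ s then v i else 0 with hu
  have hu0 : ∀ i, 0 ≤ u i := fun i => by
    by_cases h : i ∈ s <;> simp [hu, h, hv0 i]
  have hu1 : ∑ i, u i = 1 := by
    rw [hu, Finset.sum_ite_mem, Finset.univ_inter, hv1]
  have hulin : ∑ i, u i • X i = θ + ε • (θ - θ') := by
    rw [hu, ← hvlin]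
    simp_rw [ite_smul, zero_smul]
    rw [Finset.sum_ite_mem, Finset.univ_inter]
  -- mixed positive weights
  set w : Fin n → ℝ := fun i => (u i + ε / n) / (1 + ε) with hw
  have hwpos : ∀ i, 0 < w i := fun i => by
    have := hu0 i; positivity
  have hw1 : ∑ i, w i = 1 := by
    simp_rw [hw, div_eq_mul_inv, ← Finset.sum_mul, Finset.sum_add_distrib, hu1,
      Finset.sum_const, Finset.card_univ, Fintype.card_fin, nsmul_eq_mul]
    field_simp
  have h1ε : (1:ℝ) + ε ≠ 0 := by positivity
  have hwlin : ∑ i, w i • X i = θ := by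
    have expand : ∑ i, w i • X i
        = (1 + ε)⁻¹ • ((∑ i, u i • X i) + (ε / n) • ∑ i, X i) := by
      rw [Finset.smul_sum, smul_add, Finset.smul_sum, Finset.smul_sum, ← Finset.sum_add_distrib]
      refine Finset.sum_congr rfl fun i _ => ?_
      show ((u i + ε / n) / (1 + ε)) • X i = _
      match_scalars
      field_simp
    rw [expand, hulin, hθ', sampleMean]
    match_scalars <;> field_simp <;> ring
  have hprodpos : 0 < ∏ i, (n:ℝ) * w i :=
    Finset.prod_pos fun i _ => mul_pos hnpos (hwpos i)
  exact lt_of_lt_of_le hprodpos (le_csSup (bddElR n d hn X θ) ⟨w, ⟨fun i => (hwpos i).le, hw1, hwlin⟩, rfl⟩)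

/-- Lemma 1: For `θ ∈ Θₙ` and `α ∈ [0,1]`,
`R(θ̃ + α(θ - θ̃)) ≥ R(θ)`; equivalently `l(θ̃ + α(θ - θ̃)) ≤ l(θ)`. -/
theorem stmt5 (n d : ℕ) (hn : 0 < n) (hd : 0 < d)
    (X : Fin n → EuclideanSpace ℝ (Fin d))
    (hspan : (interior (convexHull ℝ (Set.range X))).Nonempty)
    (θ : EuclideanSpace ℝ (Fin d))
    (hθ : θ ∈ interior (convexHull ℝ (Set.range X)))
    (α : ℝ) (hα : α ∈ Set.Icc (0 : ℝ) 1) :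
    elR n d X θ ≤ elR n d X (sampleMean n d X + α • (θ - sampleMean n d X)) ∧
      elln n d X (sampleMean n d X + α • (θ - sampleMean n d X)) ≤ elln n d X θ := by
  obtain ⟨hα0, hα1⟩ := hα
  set θ' := sampleMean n d X + α • (θ - sampleMean n d X) with hθ'def
  have h1 : elR n d X θ ≤ elR n d X θ' := by
    apply Real.sSup_le
    · rintro x ⟨w, hw, rfl⟩
      calc ∏ i, (n:ℝ) * w i
          ≤ ∏ i, (n:ℝ) * (α * w i + (1-α)/n) := mixProd n hn α hα0 hα1 w hw.1 hw.2.1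
        _ ≤ elR n d X θ' :=
            le_csSup (bddElR n d hn X θ') ⟨_, mixMem n d hn X θ α hα0 hα1 w hw, rfl⟩
    · exact elRnonneg n d hn X θ'
  refine ⟨h1, ?_⟩
  have hpos := elRpos n d hn X θ hθ
  have hlog := Real.log_le_log hpos h1
  unfold elln
  linarith
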